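/- Weak equality is a congruence with respect to hereditary substitution: if E₁ ≈ E₂ and K₁ ≈ K₂ then K₁[X:=E₁]_k ≈ K₂[X:=E₂]_k; likewise for types (D₁ ≈ D₂ implies D₁[X:=E₁]_k ≈ D₂[X:=E₂]_k), spines, and reducing applications (D₁ ≈ D₂ implies E₁ ·_k D₁ ≈ E₂ ·_k D₂). -/
import Mathlib


set_option autoImplicit true
set_option maxHeartbeats 1000000
set_option linter.unusedVariables false

/-- Shapes (simple kinds): `k ::= ∗ | k → k`. -/
inductive SKind : Type
  | star
  | arr (j k : SKind)
/-! ## Spine-form syntax of Fω.. types and kinds (de Bruijn representation). -/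

mutual
/-- Eliminations: a head applied to a spine of arguments, `E ::= F E⃗`. -/
inductive SpTy : Type
  | elim (h : SpHead) (s : SpSpine)

/-- Heads: `F ::= X | ⊤ | ⊥ | D → E | ∀X:K.E | λX:K.E`. -/
inductive SpHead : Type
  | var (x : ℕ)
  | top
  | bot
  | arr (a b : SpTy)
  | all (k : SpKd) (a : SpTy)
  | lam (k : SpKd) (a : SpTy)

/-- Spines: finite sequences of eliminations. -/
inductive SpSpine : Type
  | nil
  | cons (a : SpTy) (s : SpSpine)

/-- Kinds in spine form: `K ::= A..B | (X:J)→K`. -/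
inductive SpKd : Type
  | intv (a b : SpTy)
  | pi (j k : SpKd)
end

/-- Shape erasure of spine-form kinds: `|A..B| = ∗`, `|(X:J)→K| = |J| → |K|`. -/
def SpKd.shape : SpKd → SKind
  | .intv _ _ => .star
  | .pi j k => .arr j.shape k.shape

/-- Spine concatenation. -/
def SpSpine.append : SpSpine → SpSpine → SpSpine
  | .nil, s' => s'
  | .cons a s, s' => .cons a (s.append s')

/-- (Non-reducing) application of an elimination to a spine. -/
def SpTy.appSp : SpTy → SpSpine → SpTy
  | .elim h s, s' => .elim h (s.append s')

/-- (Non-reducing) application of an elimination to a single argument. -/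
def SpTy.app1 (e d : SpTy) : SpTy := e.appSp (.cons d .nil)

mutual
/-- Shift: increment all variables `≥ c` by one. -/
def SpTy.shift (c : ℕ) : SpTy → SpTy
  | .elim h s => .elim (h.shift c) (s.shift c)

def SpHead.shift (c : ℕ) : SpHead → SpHead
  | .var x => if x < c then .var x else .var (x + 1)
  | .top => .top
  | .bot => .bot
  | .arr a b => .arr (a.shift c) (b.shift c)
  | .all k a => .all (k.shift c) (a.shift (c + 1))
  | .lam k a => .lam (k.shift c) (a.shift (c + 1))

def SpSpine.shift (c : ℕ) : SpSpine → SpSpine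
  | .nil => .nil
  | .cons a s => .cons (a.shift c) (s.shift c)

def SpKd.shift (c : ℕ) : SpKd → SpKd
  | .intv a b => .intv (a.shift c) (b.shift c)
  | .pi j k => .pi (j.shift c) (k.shift (c + 1))
end

/-- Weakening by `n` fresh innermost variables. -/
def SpTy.weaken (n : ℕ) (e : SpTy) : SpTy := (SpTy.shift 0)^[n] e

/-- Weakening of kinds by `n` fresh innermost variables. -/
def SpKd.weaken (n : ℕ) (k : SpKd) : SpKd := (SpKd.shift 0)^[n] k

mutual
/-- Ordinary (capture-avoiding, non-hereditary) substitution on spine form. -/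
def SpTy.subst : SpTy → ℕ → SpTy → SpTy
  | .elim (.var y) s, x, v =>
      if y = x then v.appSp (s.subst x v)
      else .elim (.var (if x < y then y - 1 else y)) (s.subst x v)
  | .elim .top s, x, v => .elim .top (s.subst x v)
  | .elim .bot s, x, v => .elim .bot (s.subst x v)
  | .elim (.arr a b) s, x, v => .elim (.arr (a.subst x v) (b.subst x v)) (s.subst x v)
  | .elim (.all k a) s, x, v =>
      .elim (.all (k.subst x v) (a.subst (x + 1) (v.shift 0))) (s.subst x v)
  | .elim (.lam k a) s, x, v =>
      .elim (.lam (k.subst x v) (a.subst (x + 1) (v.shift 0))) (s.subst x v)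

def SpSpine.subst : SpSpine → ℕ → SpTy → SpSpine
  | .nil, _, _ => .nil
  | .cons a s, x, v => .cons (a.subst x v) (s.subst x v)

def SpKd.subst : SpKd → ℕ → SpTy → SpKd
  | .intv a b, x, v => .intv (a.subst x v) (b.subst x v)
  | .pi j k, x, v => .pi (j.subst x v) (k.subst (x + 1) (v.shift 0))
end

mutual
/-- Hereditary substitution `e[x := v]_k` of the elimination `v` for variable
`x` at shape `k`, defined mutually with reducing application by recursion on
the shape `k`. -/
def SpTy.hsubst : SpTy → ℕ → SKind → SpTy → SpTy
  | .elim (.var y) s, x, k, v =>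
      if y = x then SpTy.rappSp v k (s.hsubst x k v)
      else .elim (.var (if x < y then y - 1 else y)) (s.hsubst x k v)
  | .elim .top s, x, k, v => .elim .top (s.hsubst x k v)
  | .elim .bot s, x, k, v => .elim .bot (s.hsubst x k v)
  | .elim (.arr a b) s, x, k, v =>
      .elim (.arr (a.hsubst x k v) (b.hsubst x k v)) (s.hsubst x k v)
  | .elim (.all j a) s, x, k, v =>
      .elim (.all (j.hsubst x k v) (a.hsubst (x + 1) k (v.shift 0))) (s.hsubst x k v)
  | .elim (.lam j a) s, x, k, v =>
      .elim (.lam (j.hsubst x k v) (a.hsubst (x + 1) k (v.shift 0))) (s.hsubst x k v)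
termination_by e x k v => (sizeOf k, 1, sizeOf e)

/-- Hereditary substitution in spines (pointwise). -/
def SpSpine.hsubst : SpSpine → ℕ → SKind → SpTy → SpSpine
  | .nil, _, _, _ => .nil
  | .cons a s, x, k, v => .cons (a.hsubst x k v) (s.hsubst x k v)
termination_by s x k v => (sizeOf k, 1, sizeOf s)

/-- Hereditary substitution in kinds. -/
def SpKd.hsubst : SpKd → ℕ → SKind → SpTy → SpKd
  | .intv a b, x, k, v => .intv (a.hsubst x k v) (b.hsubst x k v)
  | .pi j k', x, k, v => .pi (j.hsubst x k v) (k'.hsubst (x + 1) k (v.shift 0))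
termination_by K x k v => (sizeOf k, 1, sizeOf K)

/-- Reducing application `d ·_k v` to a single argument:  β-contracts when `d`
is an operator abstraction and `k` is an arrow shape. -/
def SpTy.rapp : SpTy → SKind → SpTy → SpTy
  | d, .star, v => d.app1 v
  | .elim (.lam _ d') .nil, .arr k1 _, v => d'.hsubst 0 k1 v
  | .elim (.var y) s, .arr _ _, v => SpTy.app1 (.elim (.var y) s) v
  | .elim .top s, .arr _ _, v => SpTy.app1 (.elim .top s) v
  | .elim .bot s, .arr _ _, v => SpTy.app1 (.elim .bot s) v
  | .elim (.arr a b) s, .arr _ _, v => SpTy.app1 (.elim (.arr a b) s) v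
  | .elim (.all j a) s, .arr _ _, v => SpTy.app1 (.elim (.all j a) s) v
  | .elim (.lam j a) (.cons b s), .arr _ _, v => SpTy.app1 (.elim (.lam j a) (.cons b s)) v
termination_by d k v => (sizeOf k, 0, 0)

/-- Reducing application `d ·_k s⃗` to a spine, unwinding `s⃗` along `k`. -/
def SpTy.rappSp : SpTy → SKind → SpSpine → SpTy
  | d, _, .nil => d
  | d, .arr k1 k2, .cons e es => SpTy.rappSp (d.rapp (.arr k1 k2) e) k2 es
  | d, .star, .cons e es => d.appSp (.cons e es)
termination_by d k s => (sizeOf k, 0, sizeOf s + 1)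
end
/-! ## Weak equality `≈` on spine-form types and kinds: the congruence that
identifies operator abstractions up to the *shape* of their domain
annotations:  `λX:J.A ≈ λX:K.B` whenever `|J| ≡ |K|` and `A ≈ B`. -/

mutual
inductive WEqTy : SpTy → SpTy → Prop
  | elim : WEqHead h₁ h₂ → WEqSp s₁ s₂ → WEqTy (.elim h₁ s₁) (.elim h₂ s₂)

inductive WEqHead : SpHead → SpHead → Prop
  | var : WEqHead (.var x) (.var x)
  | top : WEqHead .top .top
  | bot : WEqHead .bot .bot
  | arr : WEqTy a₁ a₂ → WEqTy b₁ b₂ → WEqHead (.arr a₁ b₁) (.arr a₂ b₂)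
  | all : WEqKd k₁ k₂ → WEqTy a₁ a₂ → WEqHead (.all k₁ a₁) (.all k₂ a₂)
  | lam : k₁.shape = k₂.shape → WEqTy a₁ a₂ → WEqHead (.lam k₁ a₁) (.lam k₂ a₂)

inductive WEqSp : SpSpine → SpSpine → Prop
  | nil : WEqSp .nil .nil
  | cons : WEqTy a₁ a₂ → WEqSp s₁ s₂ → WEqSp (.cons a₁ s₁) (.cons a₂ s₂)

inductive WEqKd : SpKd → SpKd → Prop
  | intv : WEqTy a₁ a₂ → WEqTy b₁ b₂ → WEqKd (.intv a₁ b₁) (.intv a₂ b₂)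
  | pi : WEqKd j₁ j₂ → WEqKd k₁ k₂ → WEqKd (.pi j₁ k₁) (.pi j₂ k₂)
end
theorem weq_append {s₁ s₂ t₁ t₂ : SpSpine} (h : WEqSp s₁ s₂) (h' : WEqSp t₁ t₂) :
    WEqSp (s₁.append t₁) (s₂.append t₂) := by
  cases h with
  | nil => exact h'
  | cons ha hs => exact .cons ha (weq_append hs h')
termination_by sizeOf s₁

theorem weq_appSp {a b : SpTy} {s t : SpSpine} (h : WEqTy a b) (h' : WEqSp s t) :
    WEqTy (a.appSp s) (b.appSp t) := by
  cases h with
  | elim hh hs => exact .elim hh (weq_append hs h')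

theorem weq_app1 {a b v w : SpTy} (h : WEqTy a b) (h' : WEqTy v w) :
    WEqTy (a.app1 v) (b.app1 w) :=
  weq_appSp h (.cons h' .nil)

theorem shape_shift (k : SpKd) (c : ℕ) : (k.shift c).shape = k.shape := by
  cases k with
  | intv a b => rfl
  | pi j k' => simp [SpKd.shift, SpKd.shape, shape_shift j c, shape_shift k' (c+1)]
termination_by sizeOf k

mutual
theorem weq_shift_ty (a b : SpTy) (h : WEqTy a b) (c : ℕ) : WEqTy (a.shift c) (b.shift c) := by
  cases h with
  | elim hh hs => exact .elim (weq_shift_head _ _ hh c) (weq_shift_sp _ _ hs c)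
termination_by sizeOf a

theorem weq_shift_head (a b : SpHead) (h : WEqHead a b) (c : ℕ) :
    WEqHead (a.shift c) (b.shift c) := by
  cases h with
  | var => simp only [SpHead.shift]; split <;> exact .var
  | top => exact .top
  | bot => exact .bot
  | arr ha hb => exact .arr (weq_shift_ty _ _ ha c) (weq_shift_ty _ _ hb c)
  | all hk ha => exact .all (weq_shift_kd _ _ hk c) (weq_shift_ty _ _ ha (c+1))
  | lam hk ha => exact .lam (by rw [shape_shift, shape_shift, hk]) (weq_shift_ty _ _ ha (c+1))
termination_by sizeOf a

theorem weq_shift_sp (a b : SpSpine) (h : WEqSp a b) (c : ℕ) : WEqSp (a.shift c) (b.shift c) := by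
  cases h with
  | nil => exact .nil
  | cons ha hs => exact .cons (weq_shift_ty _ _ ha c) (weq_shift_sp _ _ hs c)
termination_by sizeOf a

theorem weq_shift_kd (a b : SpKd) (h : WEqKd a b) (c : ℕ) : WEqKd (a.shift c) (b.shift c) := by
  cases h with
  | intv ha hb => exact .intv (weq_shift_ty _ _ ha c) (weq_shift_ty _ _ hb c)
  | pi hj hk => exact .pi (weq_shift_kd _ _ hj c) (weq_shift_kd _ _ hk (c+1))
termination_by sizeOf a
end
theorem shape_hsubst (j : SpKd) (x : ℕ) (k : SKind) (v : SpTy) :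
    (j.hsubst x k v).shape = j.shape := by
  cases j with
  | intv a b => simp [SpKd.hsubst, SpKd.shape]
  | pi a b => simp [SpKd.hsubst, SpKd.shape, shape_hsubst a x k v, shape_hsubst b (x+1) k (v.shift 0)]
termination_by sizeOf j
mutual
theorem weq_hs_kd (E₁ E₂ : SpTy) (K₁ K₂ : SpKd) (x : ℕ) (k : SKind)
    (hE : WEqTy E₁ E₂) (hK : WEqKd K₁ K₂) :
    WEqKd (K₁.hsubst x k E₁) (K₂.hsubst x k E₂) := by
  cases hK with
  | intv ha hb =>
      simp only [SpKd.hsubst]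
      exact .intv (weq_hs_ty _ _ _ _ x k hE ha) (weq_hs_ty _ _ _ _ x k hE hb)
  | pi hj hk =>
      simp only [SpKd.hsubst]
      exact .pi (weq_hs_kd _ _ _ _ x k hE hj)
        (weq_hs_kd _ _ _ _ (x+1) k (weq_shift_ty _ _ hE 0) hk)
termination_by (sizeOf k, 1, sizeOf K₁)

theorem weq_hs_ty (E₁ E₂ D₁ D₂ : SpTy) (x : ℕ) (k : SKind)
    (hE : WEqTy E₁ E₂) (hD : WEqTy D₁ D₂) :
    WEqTy (D₁.hsubst x k E₁) (D₂.hsubst x k E₂) := by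
  cases hD with
  | elim hh hs =>
    cases hh with
    | var =>
        simp only [SpTy.hsubst]
        split
        · exact weq_rappSp _ _ _ _ k hE (weq_hs_sp _ _ _ _ x k hE hs)
        · exact .elim .var (weq_hs_sp _ _ _ _ x k hE hs)
    | top =>
        simp only [SpTy.hsubst]
        exact .elim .top (weq_hs_sp _ _ _ _ x k hE hs)
    | bot =>
        simp only [SpTy.hsubst]
        exact .elim .bot (weq_hs_sp _ _ _ _ x k hE hs)
    | arr ha hb =>
        simp only [SpTy.hsubst]
        exact .elim (.arr (weq_hs_ty _ _ _ _ x k hE ha) (weq_hs_ty _ _ _ _ x k hE hb))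
          (weq_hs_sp _ _ _ _ x k hE hs)
    | all hj ha =>
        simp only [SpTy.hsubst]
        exact .elim (.all (weq_hs_kd _ _ _ _ x k hE hj)
            (weq_hs_ty _ _ _ _ (x+1) k (weq_shift_ty _ _ hE 0) ha))
          (weq_hs_sp _ _ _ _ x k hE hs)
    | lam hj ha =>
        simp only [SpTy.hsubst]
        exact .elim (.lam (by rw [shape_hsubst, shape_hsubst, hj])
            (weq_hs_ty _ _ _ _ (x+1) k (weq_shift_ty _ _ hE 0) ha))
          (weq_hs_sp _ _ _ _ x k hE hs)
termination_by (sizeOf k, 1, sizeOf D₁)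

theorem weq_hs_sp (E₁ E₂ : SpTy) (s₁ s₂ : SpSpine) (x : ℕ) (k : SKind)
    (hE : WEqTy E₁ E₂) (hs : WEqSp s₁ s₂) :
    WEqSp (s₁.hsubst x k E₁) (s₂.hsubst x k E₂) := by
  cases hs with
  | nil => simp only [SpSpine.hsubst]; exact .nil
  | cons ha ht =>
      simp only [SpSpine.hsubst]
      exact .cons (weq_hs_ty _ _ _ _ x k hE ha) (weq_hs_sp _ _ _ _ x k hE ht)
termination_by (sizeOf k, 1, sizeOf s₁)

theorem weq_rapp (D₁ D₂ v₁ v₂ : SpTy) (k : SKind)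
    (hD : WEqTy D₁ D₂) (hv : WEqTy v₁ v₂) :
    WEqTy (D₁.rapp k v₁) (D₂.rapp k v₂) := by
  cases k with
  | star =>
      cases hD with
      | elim hh hs => simp only [SpTy.rapp]; exact weq_app1 (.elim hh hs) hv
  | arr k1 k2 =>
    cases hD with
    | elim hh hs =>
      cases hh with
      | var => simp only [SpTy.rapp]; exact weq_app1 (.elim .var hs) hv
      | top => simp only [SpTy.rapp]; exact weq_app1 (.elim .top hs) hv
      | bot => simp only [SpTy.rapp]; exact weq_app1 (.elim .bot hs) hv
      | arr ha hb => simp only [SpTy.rapp]; exact weq_app1 (.elim (.arr ha hb) hs) hv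
      | all hj ha => simp only [SpTy.rapp]; exact weq_app1 (.elim (.all hj ha) hs) hv
      | lam hj ha =>
        cases hs with
        | nil =>
            simp only [SpTy.rapp]
            exact weq_hs_ty _ _ _ _ 0 k1 hv ha
        | cons hb ht =>
            simp only [SpTy.rapp]
            exact weq_app1 (.elim (.lam hj ha) (.cons hb ht)) hv
termination_by (sizeOf k, 0, 0)

theorem weq_rappSp (E₁ E₂ : SpTy) (s₁ s₂ : SpSpine) (k : SKind)
    (hE : WEqTy E₁ E₂) (hs : WEqSp s₁ s₂) :
    WEqTy (E₁.rappSp k s₁) (E₂.rappSp k s₂) := by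
  cases hs with
  | nil => simp only [SpTy.rappSp]; exact hE
  | cons ha ht =>
    cases k with
    | star =>
        simp only [SpTy.rappSp]
        exact weq_appSp hE (.cons ha ht)
    | arr k1 k2 =>
        simp only [SpTy.rappSp]
        exact weq_rappSp _ _ _ _ k2 (weq_rapp _ _ _ _ (.arr k1 k2) hE ha) ht
termination_by (sizeOf k, 0, sizeOf s₁ + 1)
end
/-- **Weak equality is a congruence w.r.t. hereditary substitution and
reducing application**: if `E₁ ≈ E₂` then weakly equal kinds, types and
spines have weakly equal hereditary substitutes, and `D₁ ≈ D₂` implies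
`E₁ ·_k D₁ ≈ E₂ ·_k D₂`. -/
theorem weq_hsubst :
    ∀ (E₁ E₂ : SpTy), WEqTy E₁ E₂ →
      (∀ (K₁ K₂ : SpKd) (x : ℕ) (k : SKind), WEqKd K₁ K₂ →
        WEqKd (K₁.hsubst x k E₁) (K₂.hsubst x k E₂)) ∧
      (∀ (D₁ D₂ : SpTy) (x : ℕ) (k : SKind), WEqTy D₁ D₂ →
        WEqTy (D₁.hsubst x k E₁) (D₂.hsubst x k E₂)) ∧
      (∀ (s₁ s₂ : SpSpine) (x : ℕ) (k : SKind), WEqSp s₁ s₂ →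
        WEqSp (s₁.hsubst x k E₁) (s₂.hsubst x k E₂)) ∧
      (∀ (D₁ D₂ : SpTy) (k : SKind), WEqTy D₁ D₂ →
        WEqTy (E₁.rapp k D₁) (E₂.rapp k D₂)) := by

  refine fun E₁ E₂ hE => ⟨fun K₁ K₂ x k hK => weq_hs_kd E₁ E₂ K₁ K₂ x k hE hK,
    fun D₁ D₂ x k hD => weq_hs_ty E₁ E₂ D₁ D₂ x k hE hD,
    fun s₁ s₂ x k hs => weq_hs_sp E₁ E₂ s₁ s₂ x k hE hs,
    fun D₁ D₂ k hD => weq_rapp E₁ E₂ D₁ D₂ k hE hD⟩
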